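/- Let Γ be a finite group and let (x_g)_{g∈Γ} be complex numbers. Define the group matrix M(Γ) indexed by Γ with entries M(Γ)_{g,h} = x_{g⁻¹h}. Then det(M(Γ)) = ∏_ρ det(∑_{h∈Γ} x_h · ρ(h))^{deg ρ}, where ρ runs over a complete set of inequivalent irreducible complex representations of Γ. -/

import Mathlib

open scoped Matrix

section Aux

private lemma frob_det_blockDiagonal' {α : Type} [Fintype α] [DecidableEq α] [LinearOrder α]
    {m' : α → Type} [∀ i, Fintype (m' i)] [∀ i, DecidableEq (m' i)]
    (M : ∀ i, Matrix (m' i) (m' i) ℂ) :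
    (Matrix.blockDiagonal' M).det = ∏ i, (M i).det := by
  rw [(Matrix.blockTriangular_blockDiagonal' M).det_fintype]
  refine Finset.prod_congr rfl fun i _ => ?_
  let e : m' i ≃ {a : Σ j, m' j // a.1 = i} :=
    { toFun := fun a => ⟨⟨i, a⟩, rfl⟩
      invFun := fun a => (a.2 ▸ a.1.2 : m' i)
      left_inv := fun a => rfl
      right_inv := by rintro ⟨⟨j, v⟩, h⟩; subst h; rfl }
  rw [← Matrix.det_submatrix_equiv_self e]
  congr 1
  ext a b
  simp [e, Matrix.toSquareBlock_def, Matrix.submatrix_apply, Matrix.blockDiagonal'_apply_eq]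

private lemma frob_det_pi {ι : Type} [Fintype ι] [LinearOrder ι]
    {M : ι → Type} [∀ i, AddCommGroup (M i)] [∀ i, Module ℂ (M i)]
    {η : ι → Type} [∀ i, Fintype (η i)] [∀ i, DecidableEq (η i)]
    (b : ∀ i, Module.Basis (η i) ℂ (M i)) (f : ∀ i, M i →ₗ[ℂ] M i) :
    LinearMap.det (LinearMap.pi fun i => (f i) ∘ₗ LinearMap.proj i) =
      ∏ i, LinearMap.det (f i) := by
  classical
  rw [← LinearMap.det_toMatrix (Pi.basis b)]
  have hr : ∏ i, LinearMap.det (f i) = ∏ i, (LinearMap.toMatrix (b i) (b i) (f i)).det :=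
    Finset.prod_congr rfl fun i _ => (LinearMap.det_toMatrix _ _).symm
  rw [hr, ← frob_det_blockDiagonal' (fun i => LinearMap.toMatrix (b i) (b i) (f i))]
  congr 1
  ext ⟨i, a⟩ ⟨i', a'⟩
  rw [LinearMap.toMatrix_apply, Pi.basis_repr, Pi.basis_apply]
  by_cases h : i' = i
  · subst h
    rw [Matrix.blockDiagonal'_apply_eq]
    simp [LinearMap.toMatrix_apply]
  · rw [Matrix.blockDiagonal'_apply_ne _ _ _ (Ne.symm h)]
    simp [LinearMap.pi_apply, Pi.single_eq_of_ne (Ne.symm h)]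

private lemma frob_det_mulLeft_matrix {n : ℕ} (A : Matrix (Fin n) (Fin n) ℂ) :
    LinearMap.det (LinearMap.mulLeft ℂ A) = A.det ^ n := by
  let e : Matrix (Fin n) (Fin n) ℂ ≃ₗ[ℂ] (Fin n → Fin n → ℂ) :=
    { toFun := fun M c r => M r c
      invFun := fun f r c => f c r
      map_add' := fun _ _ => rfl
      map_smul' := fun _ _ => rfl
      left_inv := fun _ => rfl
      right_inv := fun _ => rfl }
  have h : LinearMap.mulLeft ℂ A =
      (e.symm : (Fin n → Fin n → ℂ) →ₗ[ℂ] Matrix (Fin n) (Fin n) ℂ) ∘ₗ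
        (LinearMap.pi fun c => A.mulVecLin ∘ₗ LinearMap.proj c) ∘ₗ
        (e.symm.symm : Matrix (Fin n) (Fin n) ℂ →ₗ[ℂ] (Fin n → Fin n → ℂ)) := by
    apply LinearMap.ext; intro M
    ext r c
    simp [e, Matrix.mul_apply, Matrix.mulVecLin_apply,
      Matrix.mulVec, dotProduct]
    rfl
  rw [h, LinearMap.det_conj, frob_det_pi (fun _ => Pi.basisFun ℂ (Fin n))]
  simp [← Matrix.toLin'_apply', LinearMap.det_toLin']

private lemma frob_schur_scalar {Γ : Type} [Group Γ] {n : ℕ}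
    (ρ : Γ →* Matrix (Fin n) (Fin n) ℂ)
    (hirr : ∀ U : Submodule ℂ (Fin n → ℂ),
      (∀ g : Γ, ∀ v ∈ U, (ρ g).mulVec v ∈ U) → U = ⊥ ∨ U = ⊤)
    (T : Matrix (Fin n) (Fin n) ℂ) (hT : ∀ g, ρ g * T = T * ρ g) :
    ∃ c : ℂ, T = c • (1 : Matrix (Fin n) (Fin n) ℂ) := by
  rcases Nat.eq_zero_or_pos n with h0 | hpos
  · subst h0; exact ⟨0, Subsingleton.elim _ _⟩
  haveI : Nontrivial (Fin n → ℂ) := by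
    haveI : Nonempty (Fin n) := ⟨⟨0, hpos⟩⟩
    infer_instance
  obtain ⟨μ, hμ⟩ := Module.End.exists_eigenvalue T.mulVecLin
  refine ⟨μ, ?_⟩
  have hU : Module.End.eigenspace T.mulVecLin μ = ⊥ ∨
      Module.End.eigenspace T.mulVecLin μ = ⊤ := by
    apply hirr
    intro g v hv
    rw [Module.End.mem_eigenspace_iff] at hv ⊢
    rw [Matrix.mulVecLin_apply] at hv ⊢
    rw [Matrix.mulVec_mulVec, ← hT, ← Matrix.mulVec_mulVec, hv, Matrix.mulVec_smul]
  rcases hU with hU | hU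
  · exact absurd hU hμ
  have hall : ∀ v : Fin n → ℂ, T.mulVec v = μ • v := by
    intro v
    have : v ∈ Module.End.eigenspace T.mulVecLin μ := hU ▸ Submodule.mem_top
    rw [Module.End.mem_eigenspace_iff, Matrix.mulVecLin_apply] at this
    exact this
  ext i j
  have := congrFun (hall (Pi.single j 1)) i
  simp only [Matrix.mulVec, dotProduct, Pi.single_apply, mul_ite, mul_one, mul_zero,
    Finset.sum_ite_eq', Finset.mem_univ, if_true, Pi.smul_apply, smul_eq_mul] at this
  rw [this]
  simp [Matrix.one_apply, Pi.single_apply, mul_ite]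

private lemma frob_mul_std_mul {m n : ℕ} (M : Matrix (Fin m) (Fin m) ℂ)
    (N : Matrix (Fin n) (Fin n) ℂ) (q p : Fin m) (a b : Fin n) :
    (M * Matrix.single p a (1 : ℂ) * N) q b = M q p * N a b := by
  rw [Matrix.mul_apply]
  have : ∀ v : Fin n, (M * Matrix.single p a (1 : ℂ)) q v =
      M q p * (if v = a then 1 else 0) := by
    intro v
    rw [Matrix.mul_apply]
    simp [Matrix.single, Matrix.of_apply, ite_and, mul_ite, Finset.sum_ite_eq,
      Finset.sum_ite_eq', eq_comm]
  simp_rw [this]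
  simp [mul_ite, ite_mul, Finset.sum_ite_eq', mul_assoc]

end Aux

/-- **Frobenius' group determinant theorem** (Corollary 2 in the paper): for a finite
group `Γ` and a complete system `ρ₁, …, ρ_k` of pairwise inequivalent irreducible
complex matrix representations (irreducibility: no nontrivial invariant subspace;
inequivalence: by Schur's lemma, no nonzero intertwiner; completeness:
`∑ d_j² = |Γ|`), the group determinant factors as
`det M(Γ) = ∏_j det (∑_h x_h • ρ_j h) ^ d_j`. -/
theorem group_determinant_nonabelian {Γ : Type} [Group Γ] [Fintype Γ] [DecidableEq Γ]
    (x : Γ → ℂ) {k : ℕ} (d : Fin k → ℕ)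
    (ρ : ∀ j : Fin k, Γ →* Matrix (Fin (d j)) (Fin (d j)) ℂ)
    (hirr : ∀ j : Fin k, ∀ U : Submodule ℂ (Fin (d j) → ℂ),
      (∀ g : Γ, ∀ v ∈ U, (ρ j g).mulVec v ∈ U) → U = ⊥ ∨ U = ⊤)
    (hinequiv : ∀ i j : Fin k, i ≠ j →
      ∀ T : Matrix (Fin (d i)) (Fin (d j)) ℂ,
        (∀ g : Γ, ρ i g * T = T * ρ j g) → T = 0)
    (hcomplete : ∑ j : Fin k, (d j) ^ 2 = Fintype.card Γ) :
    (Matrix.of fun g h : Γ => x (g⁻¹ * h)).det =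
      ∏ j : Fin k, (∑ h : Γ, x h • ρ j h).det ^ (d j) := by
  classical
  -- the product algebra and the structure map
  let A := ∀ j : Fin k, Matrix (Fin (d j)) (Fin (d j)) ℂ
  let ρ' : Γ →* A := Pi.monoidHom ρ
  let Φ : MonoidAlgebra ℂ Γ →ₐ[ℂ] A := MonoidAlgebra.lift ℂ A Γ ρ'
  have hΦapply : ∀ a : MonoidAlgebra ℂ Γ, Φ a = ∑ g : Γ, a.coeff g • ρ' g := by
    intro a
    conv_lhs => rw [← a.sum_single]
    rw [map_finsuppSum]
    rw [Finsupp.sum_fintype]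
    · exact Finset.sum_congr rfl fun g _ => by rw [MonoidAlgebra.lift_single]
    · intro g; simp
  -- intertwining property of averaged matrices
  have inter : ∀ (i j : Fin k) (E : Matrix (Fin (d i)) (Fin (d j)) ℂ) (h : Γ),
      ρ i h * (∑ g : Γ, ρ i g⁻¹ * E * ρ j g) = (∑ g : Γ, ρ i g⁻¹ * E * ρ j g) * ρ j h := by
    intro i j E h
    rw [Matrix.mul_sum, Matrix.sum_mul]
    apply Fintype.sum_equiv (Equiv.mulRight h⁻¹)
    intro g
    simp only [Equiv.coe_mulRight]
    have e1 : (g * h⁻¹ : Γ)⁻¹ = h * g⁻¹ := by group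
    simp only [e1, map_mul, Matrix.mul_assoc]
    rw [← map_mul (ρ j) h⁻¹ h, inv_mul_cancel, map_one, mul_one]
  -- Schur orthogonality
  have key_ne : ∀ (i j : Fin k), i ≠ j → ∀ E : Matrix (Fin (d i)) (Fin (d j)) ℂ,
      (∑ g : Γ, ρ i g⁻¹ * E * ρ j g) = 0 :=
    fun i j hij E => hinequiv i j hij _ (inter i j E)
  have key_eq : ∀ (j : Fin k) (E : Matrix (Fin (d j)) (Fin (d j)) ℂ), ∃ c : ℂ,
      (∑ g : Γ, ρ j g⁻¹ * E * ρ j g) = c • 1 ∧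
      c * (d j : ℂ) = (Fintype.card Γ : ℂ) * E.trace := by
    intro j E
    obtain ⟨c, hc⟩ := frob_schur_scalar (ρ j) (hirr j) _ (inter j j E)
    refine ⟨c, hc, ?_⟩
    have htr : (∑ g : Γ, ρ j g⁻¹ * E * ρ j g).trace = (Fintype.card Γ : ℂ) * E.trace := by
      rw [Matrix.trace_sum]
      have : ∀ g : Γ, (ρ j g⁻¹ * E * ρ j g).trace = E.trace := by
        intro g
        rw [Matrix.trace_mul_cycle, ← map_mul]
        simp
      simp [this, Finset.sum_const, Finset.card_univ]
    rw [hc] at htr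
    rw [← htr]
    simp [Matrix.trace_smul, Matrix.trace_one]
  -- matrix coefficient functions
  let F : (Σ j : Fin k, Fin (d j) × Fin (d j)) → (Γ → ℂ) := fun t g => ρ t.1 g t.2.1 t.2.2
  have hcardΓ : ((Fintype.card Γ : ℂ)) ≠ 0 := Nat.cast_ne_zero.mpr Fintype.card_ne_zero
  have hFli : LinearIndependent ℂ F := by
    rw [Fintype.linearIndependent_iff]
    intro c hc
    rintro ⟨i, p, q⟩
    have hd : ((d i : ℂ)) ≠ 0 := by
      have : 0 < d i := p.pos
      exact_mod_cast this.ne'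
    have hZ : ∀ g : Γ, ∑ t : (Σ j : Fin k, Fin (d j) × Fin (d j)), c t * F t g = 0 := by
      intro g
      have := congrFun hc g
      simpa [Finset.sum_apply] using this
    have hterm : ∀ t : (Σ j : Fin k, Fin (d j) × Fin (d j)),
        (∑ g : Γ, (ρ i g⁻¹) q p * F t g) =
          if t = ⟨i, (p, q)⟩ then (Fintype.card Γ : ℂ) / d i else 0 := by
      rintro ⟨j, a, b⟩
      by_cases hji : j = i
      · subst hji
        obtain ⟨cE, hcE, hcEd⟩ := key_eq j (Matrix.single p a 1)
        have h1 : (∑ g : Γ, (ρ j g⁻¹) q p * (ρ j g) a b) = cE * (if q = b then 1 else 0) := by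
          have h2 : ((∑ g : Γ, ρ j g⁻¹ * Matrix.single p a (1 : ℂ) * ρ j g :
                Matrix (Fin (d j)) (Fin (d j)) ℂ)) q b
              = (cE • (1 : Matrix (Fin (d j)) (Fin (d j)) ℂ)) q b := by rw [hcE]
          rw [Matrix.sum_apply] at h2
          simp_rw [frob_mul_std_mul] at h2
          rw [h2]
          simp [Matrix.smul_apply, Matrix.one_apply]
        have htr : (Matrix.single p a (1 : ℂ)).trace = if p = a then 1 else 0 := by
          simp [Matrix.trace, Matrix.diag, Matrix.single, Matrix.of_apply, ite_and,
            Finset.sum_ite_eq', eq_comm]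
        rw [htr] at hcEd
        have hcond : ((⟨j, (a, b)⟩ : Σ j : Fin k, Fin (d j) × Fin (d j)) = ⟨j, (p, q)⟩)
            ↔ (a = p ∧ b = q) := by simp
        show (∑ g : Γ, (ρ j g⁻¹) q p * (ρ j g) a b) = _
        rw [h1]
        by_cases hap : a = p
        · subst hap
          rw [if_pos rfl, mul_one] at hcEd
          by_cases hbq : b = q
          · subst hbq
            rw [if_pos rfl, mul_one, if_pos (hcond.mpr ⟨rfl, rfl⟩), eq_div_iff hd, hcEd]
          · rw [if_neg (fun hh => hbq hh.symm), mul_zero,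
              if_neg (fun hh => hbq (hcond.mp hh).2)]
        · have hcE0 : cE = 0 := by
            rw [if_neg (fun hh => hap hh.symm), mul_zero] at hcEd
            exact (mul_eq_zero.mp hcEd).resolve_right hd
          rw [hcE0, zero_mul, if_neg (fun hh => hap (hcond.mp hh).1)]
      · have h0 := key_ne i j (fun hh => hji hh.symm) (Matrix.single p a 1)
        have h2 : ((∑ g : Γ, ρ i g⁻¹ * Matrix.single p a (1 : ℂ) * ρ j g :
              Matrix (Fin (d i)) (Fin (d j)) ℂ)) q b
            = (0 : Matrix (Fin (d i)) (Fin (d j)) ℂ) q b := by rw [h0]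
        rw [Matrix.sum_apply] at h2
        simp_rw [frob_mul_std_mul] at h2
        rw [if_neg (fun hh => hji (congrArg Sigma.fst hh))]
        exact h2
    have hswap : ∑ t : (Σ j : Fin k, Fin (d j) × Fin (d j)),
        c t * (∑ g : Γ, (ρ i g⁻¹) q p * F t g) = 0 := by
      have : ∀ t, c t * (∑ g : Γ, (ρ i g⁻¹) q p * F t g)
          = ∑ g : Γ, (ρ i g⁻¹) q p * (c t * F t g) := by
        intro t
        rw [Finset.mul_sum]
        exact Finset.sum_congr rfl fun g _ => by ring
      simp_rw [this]
      rw [Finset.sum_comm]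
      simp_rw [← Finset.mul_sum]
      simp [hZ]
    simp_rw [hterm, mul_ite, mul_zero] at hswap
    rw [Finset.sum_ite_eq' Finset.univ (⟨i, (p, q)⟩ : Σ j : Fin k, Fin (d j) × Fin (d j))] at hswap
    rw [if_pos (Finset.mem_univ _)] at hswap
    have := mul_eq_zero.mp hswap
    rcases this with h | h
    · exact h
    · exact absurd h (div_ne_zero hcardΓ hd)
  -- spanning
  have hcard : Fintype.card (Σ j : Fin k, Fin (d j) × Fin (d j)) = Fintype.card Γ := by
    rw [← hcomplete]
    simp [sq]
  haveI : Nonempty (Σ j : Fin k, Fin (d j) × Fin (d j)) := by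
    rw [← Fintype.card_pos_iff, hcard]; exact Fintype.card_pos
  have hspan : Submodule.span ℂ (Set.range F) = ⊤ := by
    let bF := basisOfLinearIndependentOfCardEqFinrank hFli
      (by rw [hcard, Module.finrank_fintype_fun_eq_card])
    have hbF : ⇑bF = F := coe_basisOfLinearIndependentOfCardEqFinrank _ _
    rw [← hbF]
    exact bF.span_eq
  -- injectivity of Φ
  have hinj : Function.Injective Φ := by
    rw [injective_iff_map_eq_zero]
    intro a ha
    have hcomp : ∀ t : Σ j : Fin k, Fin (d j) × Fin (d j), (∑ g : Γ, a.coeff g * F t g) = 0 := by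
      rintro ⟨j, p, q⟩
      have h0 : (∑ g : Γ, a.coeff g • ρ' g) = (0 : A) := by rw [← hΦapply, ha]
      have h1 := congrFun h0 j
      have h2 : ∑ g : Γ, a.coeff g • ρ j g = (0 : Matrix (Fin (d j)) (Fin (d j)) ℂ) := by
        have he : (∑ g : Γ, a.coeff g • ρ j g) = (∑ g : Γ, a.coeff g • ρ' g) j := by
          rw [Finset.sum_apply]
          exact Finset.sum_congr rfl fun g _ => rfl
        rw [he]
        exact h1
      calc ∑ g : Γ, a.coeff g * F ⟨j, (p, q)⟩ g
          = ((∑ g : Γ, a.coeff g • ρ j g : Matrix (Fin (d j)) (Fin (d j)) ℂ)) p q := by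
            rw [Matrix.sum_apply]
            exact Finset.sum_congr rfl fun g _ => by simp [F, Matrix.smul_apply]
        _ = 0 := by rw [h2]; rfl
    let L : (Γ → ℂ) →ₗ[ℂ] ℂ := ∑ g : Γ, a.coeff g • LinearMap.proj g
    have hLF : ∀ t, L (F t) = 0 := by
      intro t
      simpa [L, LinearMap.sum_apply, LinearMap.smul_apply, smul_eq_mul] using hcomp t
    have hL : L = 0 := by
      apply LinearMap.ext
      intro f
      have hf : f ∈ Submodule.span ℂ (Set.range F) := by rw [hspan]; trivial
      induction hf using Submodule.span_induction with
      | mem y hy => obtain ⟨t, rfl⟩ := hy; simpa using hLF t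
      | zero => simp
      | add f g _ _ hf hg => simp [map_add, hf, hg]
      | smul c f _ hf => simp [map_smul, hf]
    apply MonoidAlgebra.ext
    apply Finsupp.ext
    intro g
    have h4 : L (Pi.single g 1) = 0 := by rw [hL]; rfl
    have h5 : L (Pi.single g 1) = a.coeff g := by
      simp [L, LinearMap.sum_apply, Pi.single_apply, smul_eq_mul, mul_ite,
        Finset.sum_ite_eq', Finset.mem_univ]
    rw [h5] at h4
    exact h4
  -- bijectivity
  let bM : Module.Basis Γ ℂ (MonoidAlgebra ℂ Γ) := MonoidAlgebra.basis Γ ℂ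
  haveI : FiniteDimensional ℂ (MonoidAlgebra ℂ Γ) := Module.Finite.of_basis bM
  have hfr : Module.finrank ℂ (MonoidAlgebra ℂ Γ) = Module.finrank ℂ A := by
    rw [Module.finrank_eq_card_basis bM]
    have hA : Module.finrank ℂ A = ∑ j : Fin k, Module.finrank ℂ (Matrix (Fin (d j)) (Fin (d j)) ℂ) :=
      Module.finrank_pi_fintype ℂ
    rw [hA]
    rw [← hcomplete]
    refine (Finset.sum_congr rfl fun j _ => ?_).symm
    rw [Module.finrank_matrix]
    simp [sq]
  have hsurj : Function.Surjective Φ :=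
    (LinearMap.injective_iff_surjective_of_finrank_eq_finrank hfr
      (f := Φ.toLinearMap)).mp hinj
  let e : MonoidAlgebra ℂ Γ ≃ₐ[ℂ] A := AlgEquiv.ofBijective Φ ⟨hinj, hsurj⟩
  -- the group-algebra element
  let a₀ : MonoidAlgebra ℂ Γ := MonoidAlgebra.ofCoeff (Finsupp.equivFunOnFinite.symm x)
  have ha₀ : ∀ g : Γ, a₀.coeff g = x g := fun g => rfl
  -- Step A : the group determinant is the determinant of left multiplication by a₀
  have stepA : (Matrix.of fun g h : Γ => x (g⁻¹ * h)).det =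
      LinearMap.det (LinearMap.mulLeft ℂ a₀) := by
    rw [← LinearMap.det_toMatrix bM]
    have hmat : LinearMap.toMatrix bM bM (LinearMap.mulLeft ℂ a₀) =
        (Matrix.of fun g h : Γ => x (g⁻¹ * h)).submatrix (Equiv.inv Γ) (Equiv.inv Γ) := by
      ext g h
      rw [LinearMap.toMatrix_apply]
      have hb : bM h = MonoidAlgebra.single h 1 := rfl
      rw [hb]
      have : (LinearMap.mulLeft ℂ a₀) (MonoidAlgebra.single h 1) =
          a₀ * MonoidAlgebra.single h 1 := rfl
      rw [this]
      have hrepr : ∀ v : MonoidAlgebra ℂ Γ, bM.repr v g = v.coeff g := fun v => rfl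
      rw [hrepr, MonoidAlgebra.mul_single_apply]
      simp [ha₀, Matrix.submatrix_apply, Matrix.of_apply]
    rw [hmat, Matrix.det_submatrix_equiv_self]
  -- Step B : transport along the algebra isomorphism
  have stepB : LinearMap.det (LinearMap.mulLeft ℂ a₀) =
      LinearMap.det (LinearMap.mulLeft ℂ (Φ a₀)) := by
    have hconj : LinearMap.mulLeft ℂ (Φ a₀) =
        (e.toLinearEquiv : MonoidAlgebra ℂ Γ →ₗ[ℂ] A) ∘ₗ (LinearMap.mulLeft ℂ a₀) ∘ₗ
          (e.toLinearEquiv.symm : A →ₗ[ℂ] MonoidAlgebra ℂ Γ) := by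
      apply LinearMap.ext
      intro m
      show Φ a₀ * m = e (a₀ * e.toLinearEquiv.symm m)
      rw [map_mul]
      have : e (e.toLinearEquiv.symm m) = m := e.toLinearEquiv.apply_symm_apply m
      rw [this]
      rfl
    rw [hconj, LinearMap.det_conj]
  -- Step C : value of Φ a₀
  have stepC : ∀ j : Fin k, Φ a₀ j = ∑ h : Γ, x h • ρ j h := by
    intro j
    rw [hΦapply]
    have he : (∑ g : Γ, a₀.coeff g • ρ' g) j = ∑ g : Γ, a₀.coeff g • ρ j g := by
      rw [Finset.sum_apply]
      exact Finset.sum_congr rfl fun g _ => rfl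
    rw [he]
    exact Finset.sum_congr rfl fun g _ => by rw [ha₀]
  -- Step D : determinant of left multiplication on the product of matrix algebras
  have stepD : LinearMap.det (LinearMap.mulLeft ℂ (Φ a₀)) =
      ∏ j : Fin k, ((Φ a₀) j).det ^ (d j) := by
    have hsplit : LinearMap.mulLeft ℂ (Φ a₀) =
        LinearMap.pi (fun j => (LinearMap.mulLeft ℂ ((Φ a₀) j)) ∘ₗ LinearMap.proj j) := by
      apply LinearMap.ext
      intro m
      rfl
    rw [hsplit, frob_det_pi (fun j => Matrix.stdBasis ℂ (Fin (d j)) (Fin (d j)))]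
    exact Finset.prod_congr rfl fun j _ => frob_det_mulLeft_matrix _
  rw [stepA, stepB, stepD]
  exact Finset.prod_congr rfl fun j _ => by rw [stepC]
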